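/- Let f : {-1,1}^R -> [-1,1] and suppose that the 'non-linear' Fourier mass satisfies ||f^{!=1}||_2^2 = sum_{|S| != 1} \hat{f}(S)^2 <= 2^{-R}. Then sum_{i=1}^R |\hat{f}({i})| <= 2. -/
import Mathlib

open Finset

/-- The character `χ_S` on the boolean cube `{-1,1}^R` (encoded via `Fin R → Bool`,
with `true ↦ 1` and `false ↦ -1`). -/
noncomputable def bchi {R : ℕ} (S : Finset (Fin R)) (x : Fin R → Bool) : ℝ :=
  ∏ i ∈ S, (if x i then (1:ℝ) else -1)

/-- The Fourier coefficient `f̂(S) = E_x[f(x) χ_S(x)]` over the uniform measure. -/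
noncomputable def bfourier {R : ℕ} (f : (Fin R → Bool) → ℝ) (S : Finset (Fin R)) : ℝ :=
  (2^R : ℝ)⁻¹ * ∑ x : Fin R → Bool, f x * bchi S x

lemma bchi_sq {R : ℕ} (S : Finset (Fin R)) (x : Fin R → Bool) : (bchi S x)^2 = 1 := by
  rw [bchi, ← Finset.prod_pow]
  apply Finset.prod_eq_one
  intro i _
  cases x i <;> norm_num

lemma sum_bchi_mul {R : ℕ} (x y : Fin R → Bool) :
    ∑ S : Finset (Fin R), bchi S x * bchi S y = if x = y then (2^R : ℝ) else 0 := by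
  have h1 : ∀ S : Finset (Fin R), bchi S x * bchi S y
      = ∏ i ∈ S, (if x i = y i then (1:ℝ) else -1) := by
    intro S
    rw [bchi, bchi, ← Finset.prod_mul_distrib]
    exact Finset.prod_congr rfl fun i _ => by cases x i <;> cases y i <;> norm_num
  simp only [h1]
  have h2 := Finset.prod_add (fun i : Fin R => (if x i = y i then (1:ℝ) else -1))
    (fun _ => (1:ℝ)) Finset.univ
  simp only [Finset.prod_const_one, mul_one, Finset.powerset_univ] at h2
  rw [← h2]
  by_cases hxy : x = y
  · subst hxy
    simp
    norm_num
  · rw [if_neg hxy]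
    obtain ⟨i, hi⟩ : ∃ i, x i ≠ y i := by
      by_contra h
      push_neg at h
      exact hxy (funext h)
    exact Finset.prod_eq_zero (Finset.mem_univ i) (by rw [if_neg hi]; ring)

lemma bfourier_inversion {R : ℕ} (f : (Fin R → Bool) → ℝ) (y : Fin R → Bool) :
    ∑ S : Finset (Fin R), bfourier f S * bchi S y = f y := by
  have h2 : (2^R : ℝ) ≠ 0 := by positivity
  calc ∑ S : Finset (Fin R), bfourier f S * bchi S y
      = ∑ S : Finset (Fin R), ∑ x : Fin R → Bool, (2^R : ℝ)⁻¹ * (f x * (bchi S x * bchi S y)) := by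
        simp only [bfourier, Finset.sum_mul, Finset.mul_sum]
        exact Finset.sum_congr rfl fun S _ => Finset.sum_congr rfl fun x _ => by ring
    _ = ∑ x : Fin R → Bool, ∑ S : Finset (Fin R), (2^R : ℝ)⁻¹ * (f x * (bchi S x * bchi S y)) :=
        Finset.sum_comm
    _ = ∑ x : Fin R → Bool, (2^R : ℝ)⁻¹ * (f x * ∑ S : Finset (Fin R), bchi S x * bchi S y) := by
        simp only [Finset.mul_sum]
    _ = f y := by
        simp only [sum_bchi_mul, mul_ite, mul_zero, Finset.sum_ite_eq', Finset.mem_univ, if_true]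
        field_simp

/-- If `f : {-1,1}^R → [-1,1]` has non-linear Fourier mass at most `2^{-R}`, then
`∑_i |f̂({i})| ≤ 2`. -/
theorem stmt19 (R : ℕ) (f : (Fin R → Bool) → ℝ) (hf : ∀ x, |f x| ≤ 1)
    (hmass : ∑ S ∈ Finset.univ.filter (fun S : Finset (Fin R) => S.card ≠ 1),
        (bfourier f S)^2 ≤ (2^R : ℝ)⁻¹) :
    ∑ i : Fin R, |bfourier f {i}| ≤ 2 := by
  by_contra hcon
  push_neg at hcon
  classical
  set y : Fin R → Bool := fun i => decide (0 ≤ bfourier f {i}) with hy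
  have hlin : ∀ i : Fin R, bfourier f {i} * bchi {i} y = |bfourier f {i}| := by
    intro i
    have : bchi {i} y = if y i then (1:ℝ) else -1 := by simp [bchi]
    rw [this, hy]
    by_cases h0 : 0 ≤ bfourier f {i}
    · simp [h0, abs_of_nonneg h0]
    · simp [h0, abs_of_neg (lt_of_not_ge h0)]
  -- split inversion sum
  have hsplit : ∑ S ∈ Finset.univ.filter (fun S : Finset (Fin R) => S.card = 1),
        bfourier f S * bchi S y
      + ∑ S ∈ Finset.univ.filter (fun S : Finset (Fin R) => S.card ≠ 1),
        bfourier f S * bchi S y = f y := by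
    rw [Finset.sum_filter_add_sum_filter_not]
    exact bfourier_inversion f y
  have himg : Finset.univ.filter (fun S : Finset (Fin R) => S.card = 1)
      = Finset.univ.image (fun i : Fin R => ({i} : Finset (Fin R))) := by
    ext S
    simp [Finset.card_eq_one, eq_comm]
  have hlinsum : ∑ S ∈ Finset.univ.filter (fun S : Finset (Fin R) => S.card = 1),
        bfourier f S * bchi S y = ∑ i : Fin R, |bfourier f {i}| := by
    rw [himg, Finset.sum_image (fun a _ b _ h => Finset.singleton_injective h)]
    exact Finset.sum_congr rfl fun i _ => hlin i
  set N : ℝ := ∑ S ∈ Finset.univ.filter (fun S : Finset (Fin R) => S.card ≠ 1),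
        bfourier f S * bchi S y with hN
  have hNlt : N < -1 := by
    have hfy : f y ≤ 1 := (abs_le.mp (hf y)).2
    have : N = f y - ∑ i : Fin R, |bfourier f {i}| := by
      rw [← hlinsum]; linarith [hsplit]
    rw [this]
    linarith
  have hNsq : 1 < N^2 := by nlinarith
  -- Cauchy-Schwarz
  have hcs2 : N^2 ≤ (∑ S ∈ Finset.univ.filter (fun S : Finset (Fin R) => S.card ≠ 1),
        (bfourier f S)^2) * ∑ S ∈ Finset.univ.filter (fun S : Finset (Fin R) => S.card ≠ 1),
        (bchi S y)^2 :=
    Finset.sum_mul_sq_le_sq_mul_sq _ _ _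
  have hchi : ∑ S ∈ Finset.univ.filter (fun S : Finset (Fin R) => S.card ≠ 1),
      (bchi S y)^2 ≤ (2^R : ℝ) := by
    simp only [bchi_sq]
    rw [Finset.sum_const, nsmul_eq_mul, mul_one]
    calc ((Finset.univ.filter (fun S : Finset (Fin R) => S.card ≠ 1)).card : ℝ)
        ≤ ((Finset.univ : Finset (Finset (Fin R))).card : ℝ) := by
          exact_mod_cast Finset.card_le_card (Finset.filter_subset _ _)
      _ = (2^R : ℝ) := by
          rw [Finset.card_univ, Fintype.card_finset, Fintype.card_fin]
          push_cast; ring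
  have hsq_nonneg : (0:ℝ) ≤ ∑ S ∈ Finset.univ.filter (fun S : Finset (Fin R) => S.card ≠ 1),
      (bfourier f S)^2 := Finset.sum_nonneg fun S _ => sq_nonneg _
  have : N^2 ≤ 1 := by
    calc N^2 ≤ _ := hcs2
      _ ≤ (2^R : ℝ)⁻¹ * (2^R : ℝ) := by
          apply mul_le_mul hmass hchi (Finset.sum_nonneg fun S _ => sq_nonneg _) (by positivity)
      _ = 1 := by
          field_simp
  linarith
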